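/- The quiver on I × ℤ defined by arrows (i,r) → (j,s) iff C_{ij} ≠ 0 and s = r + C_{ij} (C the Cartan matrix of a simply-laced g with connected Dynkin diagram) has exactly two connected components, given by the parity classes: (i,r) and (j,s) lie in the same component iff r - s ≡ d(i,j) mod 2, where d(i,j) is the graph distance between i and j in the Dynkin diagram. -/

import Mathlib

open SimpleGraph

section Aux

variable {I : Type*} (G : SimpleGraph I)

private lemma zmod2_add_one_add_one : ∀ x : ZMod 2, x + 1 + 1 = x := by decide
private lemma zmod2_self_add_self : ∀ x : ZMod 2, x + x = 0 := by decide

/-- in a tree, any path realizes the distance -/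
private lemma aux_path_len (hconn : G.Connected) (htree : G.IsAcyclic)
    {u v : I} (p : G.Walk u v) (hp : p.IsPath) : p.length = G.dist u v := by
  obtain ⟨w, hw, hl⟩ := hconn.exists_path_of_dist u v
  have := htree.path_unique ⟨p, hp⟩ ⟨w, hw⟩
  have : p = w := congrArg Subtype.val this
  rw [this, hl]

/-- adjacency flips distance-to-base parity in a tree -/
private lemma aux_adj_dist (hconn : G.Connected) (htree : G.IsAcyclic)
    (a : I) {i j : I} (h : G.Adj i j) :
    G.dist a j = G.dist a i + 1 ∨ G.dist a i = G.dist a j + 1 := by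
  classical
  obtain ⟨q, hq, hlq⟩ := hconn.exists_path_of_dist a j
  by_cases hi : i ∈ q.support
  · left
    have htake : (q.takeUntil i hi).IsPath := hq.takeUntil hi
    have hdrop : (q.dropUntil i hi).IsPath := hq.dropUntil hi
    have hdrop1 : (q.dropUntil i hi).length = 1 := by
      have := htree.path_unique ⟨q.dropUntil i hi, hdrop⟩ (SimpleGraph.Path.singleton h)
      have h2 : q.dropUntil i hi = (SimpleGraph.Path.singleton h : G.Walk i j) :=
        congrArg Subtype.val this
      rw [h2]; rfl
    have hlen := congrArg Walk.length (q.take_spec hi)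
    rw [Walk.length_append, hdrop1] at hlen
    rw [← hlq, ← hlen, aux_path_len G hconn htree _ htake]
  · right
    have hpath : (Walk.cons h q.reverse).IsPath := by
      apply hq.reverse.cons
      simpa using hi
    have := aux_path_len G hconn htree _ hpath
    rw [Walk.length_cons, Walk.length_reverse, hlq] at this
    have h3 : G.dist i a = G.dist a i := SimpleGraph.dist_comm
    omega

variable (a : I)

/-- the 2-coloring -/
private noncomputable def aux_c (i : I) : ZMod 2 := (G.dist a i : ZMod 2)

private lemma aux_c_adj (hconn : G.Connected) (htree : G.IsAcyclic)
    {i j : I} (h : G.Adj i j) : aux_c G a j = aux_c G a i + 1 := by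
  rcases aux_adj_dist G hconn htree a h with hd | hd
  · simp [aux_c, hd]
  · have : aux_c G a i = aux_c G a j + 1 := by simp [aux_c, hd]
    rw [this, zmod2_add_one_add_one]

private lemma aux_walk_parity (hconn : G.Connected) (htree : G.IsAcyclic)
    {i j : I} (w : G.Walk i j) :
    (w.length : ZMod 2) = aux_c G a i + aux_c G a j := by
  induction w with
  | nil => simp [zmod2_self_add_self]
  | cons h w ih =>
    rename_i u v x
    rw [Walk.length_cons]
    push_cast
    rw [ih, aux_c_adj G a hconn htree h]
    linear_combination zmod2_self_add_self 1

private lemma aux_dist_parity (hconn : G.Connected) (htree : G.IsAcyclic)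
    (i j : I) : ((G.dist i j : ℕ) : ZMod 2) = aux_c G a i + aux_c G a j := by
  obtain ⟨w, hw⟩ := hconn.exists_walk_length_eq_dist i j
  rw [← hw]; exact aux_walk_parity G a hconn htree w

end Aux

/-- The quiver on `I × ℤ` defined by arrows `(i,r) → (j,s)` iff
`C_{ij} ≠ 0` and `s = r + C_{ij}` (for a simply-laced `g` with connected Dynkin diagram,
a tree, encoded as the simple graph `G`; the arrows are `(i,r) → (i,r+2)` and
`(i,r) → (j,r-1)` for `j ∼ i`), viewed as an undirected graph via symmetrization, has
exactly two connected components, given by the parity classes: `(i,r)` and `(j,s)` lie in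
the same component iff `r - s ≡ d(i,j) (mod 2)`, where `d(i,j)` is the graph distance in
the Dynkin diagram. -/
theorem stmt18 {I : Type*} [Fintype I] (G : SimpleGraph I)
    (hconn : G.Connected) (htree : G.IsAcyclic) :
    (∀ p q : I × ℤ,
      (SimpleGraph.fromRel (fun p q : I × ℤ =>
          (p.1 = q.1 ∧ q.2 = p.2 + 2) ∨ (G.Adj p.1 q.1 ∧ q.2 = p.2 - 1))).Reachable p q
        ↔ Int.ModEq 2 (p.2 - q.2) (G.dist p.1 q.1))
    ∧ Nat.card (SimpleGraph.fromRel (fun p q : I × ℤ =>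
        (p.1 = q.1 ∧ q.2 = p.2 + 2) ∨ (G.Adj p.1 q.1 ∧ q.2 = p.2 - 1))).ConnectedComponent
      = 2 := by
  classical
  have hne : Nonempty I := hconn.nonempty
  obtain ⟨a⟩ := hne
  set H : SimpleGraph (I × ℤ) := SimpleGraph.fromRel (fun p q : I × ℤ =>
      (p.1 = q.1 ∧ q.2 = p.2 + 2) ∨ (G.Adj p.1 q.1 ∧ q.2 = p.2 - 1)) with hH
  set c : I → ZMod 2 := aux_c G a with hc
  set F : I × ℤ → ZMod 2 := fun p => (p.2 : ZMod 2) + c p.1 with hF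
  -- F is invariant under H-adjacency
  have hFadj : ∀ p q : I × ℤ, H.Adj p q → F p = F q := by
    rintro ⟨i, r⟩ ⟨j, s⟩ hadj
    rw [hH, SimpleGraph.fromRel_adj] at hadj
    obtain ⟨-, hrel⟩ := hadj
    rcases hrel with (⟨h1, h2⟩ | ⟨h1, h2⟩) | (⟨h1, h2⟩ | ⟨h1, h2⟩) <;>
      dsimp only at h1 h2 <;> subst h2 <;> show _ + _ = _ + _ <;> dsimp only
    · subst h1; push_cast; linear_combination -zmod2_self_add_self 1
    · rw [hc, aux_c_adj G a hconn htree h1]; push_cast; ring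
    · subst h1; push_cast; linear_combination zmod2_self_add_self 1
    · rw [hc, aux_c_adj G a hconn htree h1]; push_cast; ring
  have hFreach : ∀ p q : I × ℤ, H.Reachable p q → F p = F q := by
    intro p q hr
    obtain ⟨w⟩ := hr
    induction w with
    | nil => rfl
    | cons h w ih => exact (hFadj _ _ h).trans ih
  -- vertical moves
  have hvert : ∀ (i : I) (r s : ℤ), r ≡ s [ZMOD 2] → H.Reachable (i, r) (i, s) := by
    intro i r s hrs
    obtain ⟨t, ht⟩ := hrs.dvd
    have hst : s = r + 2 * t := by linarith
    subst hst
    clear hrs ht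
    induction t using Int.induction_on with
    | zero => exact by simpa using SimpleGraph.Reachable.refl (i, r)
    | succ n ih =>
      refine ih.trans ?_
      apply SimpleGraph.Adj.reachable
      rw [hH, SimpleGraph.fromRel_adj]
      constructor
      · simp only [ne_eq, Prod.mk.injEq, not_and]
        intro _; omega
      · left; left; constructor; rfl; push_cast; ring
    | pred n ih =>
      refine ih.trans ?_
      apply SimpleGraph.Reachable.symm
      apply SimpleGraph.Adj.reachable
      rw [hH, SimpleGraph.fromRel_adj]
      constructor
      · simp only [ne_eq, Prod.mk.injEq, not_and]
        intro _; omega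
      · left; left; constructor; rfl; push_cast; ring
  -- horizontal moves along a walk
  have hhor : ∀ (i j : I) (w : G.Walk i j) (r : ℤ),
      H.Reachable (i, r) (j, r - w.length) := by
    intro i j w
    induction w with
    | nil => intro r; simpa using SimpleGraph.Reachable.refl _
    | cons h w ih =>
      rename_i u v x
      intro r
      have step : H.Adj (u, r) (v, r - 1) := by
        rw [hH, SimpleGraph.fromRel_adj]
        constructor
        · simp only [ne_eq, Prod.mk.injEq, not_and]
          intro _; omega
        · left; right; exact ⟨h, rfl⟩
      refine step.reachable.trans ?_
      have := ih (r - 1)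
      convert this using 2
      rw [Walk.length_cons]
      push_cast
      ring
  -- the main iff
  have hiff : ∀ p q : I × ℤ, H.Reachable p q ↔ Int.ModEq 2 (p.2 - q.2) (G.dist p.1 q.1) := by
    rintro ⟨i, r⟩ ⟨j, s⟩
    constructor
    · intro hr
      have h2 : (r : ZMod 2) + c i = (s : ZMod 2) + c j := hFreach _ _ hr
      rw [hc] at h2
      have key : ((r - s : ℤ) : ZMod 2) = ((G.dist i j : ℤ) : ZMod 2) := by
        have hd := aux_dist_parity G a hconn htree i j
        push_cast at hd ⊢
        rw [hd]
        linear_combination h2 - zmod2_self_add_self (aux_c G a i)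
      exact (ZMod.intCast_eq_intCast_iff _ _ _).mp key
    · intro hmod
      obtain ⟨w, hw⟩ := hconn.exists_walk_length_eq_dist i j
      refine (hhor i j w r).trans ?_
      apply hvert
      -- r - w.length ≡ s [ZMOD 2]
      have hwl : (w.length : ℤ) ≡ (G.dist i j : ℤ) [ZMOD 2] := by rw [hw]
      have : r - (w.length : ℤ) ≡ r - (G.dist i j : ℤ) [ZMOD 2] := Int.ModEq.sub rfl hwl
      refine this.trans ?_
      have hmod' : (r - s) % 2 = (G.dist i j : ℤ) % 2 := hmod
      unfold Int.ModEq
      omega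
  refine ⟨hiff, ?_⟩
  -- counting components
  have hwalkF : ∀ (v w : I × ℤ) (p : H.Walk v w), p.IsPath → F v = F w := by
    intro v w p _
    exact hFreach v w p.reachable
  let Φ : H.ConnectedComponent → ZMod 2 := SimpleGraph.ConnectedComponent.lift F hwalkF
  have hbij : Function.Bijective Φ := by
    constructor
    · intro x y
      refine SimpleGraph.ConnectedComponent.ind₂ (fun p q hpq => ?_) x y
      apply SimpleGraph.ConnectedComponent.sound
      rw [hiff]
      have h2 : (p.2 : ZMod 2) + c p.1 = (q.2 : ZMod 2) + c q.1 := hpq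
      rw [hc] at h2
      have key : ((p.2 - q.2 : ℤ) : ZMod 2) = ((G.dist p.1 q.1 : ℤ) : ZMod 2) := by
        have hd := aux_dist_parity G a hconn htree p.1 q.1
        push_cast at hd ⊢
        rw [hd]
        linear_combination h2 - zmod2_self_add_self (aux_c G a p.1)
      exact (ZMod.intCast_eq_intCast_iff _ _ _).mp key
    · intro x
      fin_cases x
      · refine ⟨H.connectedComponentMk (a, 0), ?_⟩
        show F (a, 0) = 0
        simp [hF, hc, aux_c, SimpleGraph.dist_self]
      · refine ⟨H.connectedComponentMk (a, 1), ?_⟩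
        show F (a, 1) = 1
        simp [hF, hc, aux_c, SimpleGraph.dist_self]
  rw [Nat.card_eq_of_bijective Φ hbij]
  simp [Nat.card_eq_fintype_card]
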